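/- The trace norm is non-increasing under partial trace: for any Hermitian matrix X on a bipartite system A ⊗ B, ‖Tr_B(X)‖₁ ≤ ‖X‖₁. -/

import Mathlib

open Matrix BigOperators Complex
open scoped ComplexOrder Kronecker

noncomputable section

/-- Frobenius (Hilbert–Schmidt) norm `‖X‖₂ = √(Tr(XᴴX))`. -/
def frobNorm {m : Type*} [Fintype m] (X : Matrix m m ℂ) : ℝ :=
  Real.sqrt ((Xᴴ * X).trace.re)

/-- Trace norm (Schatten 1-norm) `‖X‖₁ = Tr √(XᴴX)`. -/
def traceNorm {m : Type*} [Fintype m] [DecidableEq m] (X : Matrix m m ℂ) : ℝ :=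
  (((Matrix.posSemidef_conjTranspose_mul_self X).isHermitian.eigenvectorUnitary : Matrix m m ℂ) *
    diagonal (((↑) : ℝ → ℂ) ∘ Real.sqrt ∘ (Matrix.posSemidef_conjTranspose_mul_self X).isHermitian.eigenvalues) *
    (star (Matrix.posSemidef_conjTranspose_mul_self X).isHermitian.eigenvectorUnitary : Matrix m m ℂ)).trace.re

/-- Trace distance `|ρ − σ|_tr = ½‖ρ − σ‖₁`. -/
def traceDist {m : Type*} [Fintype m] [DecidableEq m] (ρ σ : Matrix m m ℂ) : ℝ :=
  traceNorm (ρ - σ) / 2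

/-- Purity `Tr(ρ²)` (real part). -/
def purity {m : Type*} [Fintype m] (ρ : Matrix m m ℂ) : ℝ := ((ρ * ρ).trace).re

/-- Outer product `|ψ⟩⟨ψ|`. -/
def outer {m : Type*} (ψ : m → ℂ) : Matrix m m ℂ :=
  Matrix.of fun a b => ψ a * star (ψ b)

/-- Partial trace over the second tensor factor. -/
def ptraceB {A B : Type*} [Fintype B] (M : Matrix (A × B) (A × B) ℂ) : Matrix A A ℂ :=
  Matrix.of fun a a' => ∑ b, M (a, b) (a', b)

/-- Partial trace over the first tensor factor. -/
def ptraceA {A B : Type*} [Fintype A] (M : Matrix (A × B) (A × B) ℂ) : Matrix B B ℂ :=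
  Matrix.of fun b b' => ∑ a, M (a, b) (a, b')

/-- Index type of the `n`-qubit computational basis. -/
abbrev QIdx (n : ℕ) := Fin n → Fin 2

/-- Merge a bit assignment on `s` with one on its complement. -/
def mergeOn {n : ℕ} (s : Finset (Fin n)) (f : {i // i ∈ s} → Fin 2)
    (g : {i // i ∉ s} → Fin 2) : QIdx n :=
  fun i => if h : i ∈ s then f ⟨i, h⟩ else g ⟨i, h⟩

/-- Reduced density matrix on the qubit subset `s` (partial trace over `sᶜ`). -/
def reduce {n : ℕ} (s : Finset (Fin n)) (ρ : Matrix (QIdx n) (QIdx n) ℂ) :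
    Matrix ({i // i ∈ s} → Fin 2) ({i // i ∈ s} → Fin 2) ℂ :=
  Matrix.of fun f f' => ∑ g : {i // i ∉ s} → Fin 2, ρ (mergeOn s f g) (mergeOn s f' g)

/-- Concentratable Entanglement `C(|ψ⟩) = 1 − 2⁻ⁿ Σ_{α⊆[n]} Tr(ρ_α²)`. -/
def CE {n : ℕ} (ψ : QIdx n → ℂ) : ℝ :=
  1 - (1 / 2 ^ n) * ∑ s : Finset (Fin n), purity (reduce s (outer ψ))

end

noncomputable section
set_option linter.unusedSectionVars false


variable {m : Type*} [Fintype m] [DecidableEq m]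

lemma conj_mul_conj (V : Matrix m m ℂ) (hV : V ∈ Matrix.unitaryGroup m ℂ)
    (d e : m → ℂ) :
    (V * diagonal d * star V) * (V * diagonal e * star V)
      = V * diagonal (fun i => d i * e i) * star V := by
  have h1 : star V * V = 1 := Matrix.mem_unitaryGroup_iff'.mp hV
  calc (V * diagonal d * star V) * (V * diagonal e * star V)
      = V * (diagonal d * (star V * V) * diagonal e) * star V := by
        simp only [Matrix.mul_assoc]
    _ = V * diagonal (fun i => d i * e i) * star V := by
        rw [h1, Matrix.mul_one, diagonal_mul_diagonal]

lemma trace_conj (V : Matrix m m ℂ) (hV : V ∈ Matrix.unitaryGroup m ℂ)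
    (D : Matrix m m ℂ) : (V * D * star V).trace = D.trace := by
  rw [Matrix.trace_mul_cycle, Matrix.mem_unitaryGroup_iff'.mp hV, Matrix.one_mul]

lemma psd_diag_re_nonneg {N : Matrix m m ℂ} (hN : N.PosSemidef) (i : m) :
    0 ≤ (N i i).re := by
  exact (Complex.nonneg_iff.mp hN.diag_nonneg).1

lemma traceNorm_herm (Y : Matrix m m ℂ) (hY : Y.IsHermitian) :
    traceNorm Y = ∑ i, |hY.eigenvalues i| := by
  set V : Matrix m m ℂ := (hY.eigenvectorUnitary : Matrix m m ℂ) with hVdef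
  have hVmem : V ∈ Matrix.unitaryGroup m ℂ := hY.eigenvectorUnitary.2
  set d : m → ℝ := hY.eigenvalues with hd
  set B : Matrix m m ℂ := V * diagonal (fun i => ((|d i| : ℝ) : ℂ)) * star V with hB
  have hBpsd : B.PosSemidef := by
    refine (posSemidef_diagonal_iff.mpr fun i => ?_).mul_mul_conjTranspose_same V
    exact Complex.zero_le_real.mpr (abs_nonneg _)
  have hsq : B ^ 2 = Yᴴ * Y := by
    rw [hY.eq, pow_two, hB, conj_mul_conj V hVmem]
    conv_rhs => rw [hY.spectral_theorem, Unitary.conjStarAlgAut_apply, conj_mul_conj V hVmem]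
    have hdd : (fun i => ((|d i| : ℝ) : ℂ) * ((|d i| : ℝ) : ℂ))
        = fun i => (RCLike.ofReal ∘ d) i * (RCLike.ofReal ∘ d) i := by
      funext i
      simp only [Function.comp_apply]
      rw [← Complex.ofReal_mul, abs_mul_abs_self]
      push_cast
      rfl
    rw [hdd]
  have hBs : B = (Matrix.posSemidef_conjTranspose_mul_self Y).isHermitian.cfc Real.sqrt := by
    rw [← IsHermitian.cfc_eq, ← cfcₙ_eq_cfc]
    open scoped MatrixOrder in
    rw [← CFC.sqrt_eq_real_sqrt _ (posSemidef_conjTranspose_mul_self Y).nonneg]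
    open scoped MatrixOrder in
    exact (CFC.sqrt_unique (by rw [← pow_two]; exact hsq) hBpsd.nonneg).symm
  rw [show traceNorm Y = ((Matrix.posSemidef_conjTranspose_mul_self Y).isHermitian.cfc
    Real.sqrt).trace.re from rfl, ← hBs, hB, trace_conj V hVmem, Matrix.trace_diagonal, Complex.re_sum]
  simp

lemma re_trace_mul_le (X : Matrix m m ℂ) (hX : X.IsHermitian) (C : Matrix m m ℂ)
    (h1 : (1 - C).PosSemidef) (h2 : (1 + C).PosSemidef) :
    ((C * X).trace).re ≤ traceNorm X := by
  rw [traceNorm_herm X hX]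
  set V : Matrix m m ℂ := (hX.eigenvectorUnitary : Matrix m m ℂ) with hVdef
  have hVmem : V ∈ Matrix.unitaryGroup m ℂ := hX.eigenvectorUnitary.2
  have h1' : star V * V = 1 := Matrix.mem_unitaryGroup_iff'.mp hVmem
  have h1c : Vᴴ * V = 1 := h1'
  have h2' : V * star V = 1 := Matrix.mem_unitaryGroup_iff.mp hVmem
  set d : m → ℝ := hX.eigenvalues with hd
  set M : Matrix m m ℂ := star V * C * V with hM
  have htr : (C * X).trace = ∑ i, M i i * (d i : ℂ) := by
    have key : C * (V * diagonal (RCLike.ofReal ∘ d) * star V)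
        = V * (M * diagonal (RCLike.ofReal ∘ d)) * star V := by
      calc C * (V * diagonal (RCLike.ofReal ∘ d) * star V)
          = (V * star V) * C * (V * diagonal (RCLike.ofReal ∘ d) * star V) := by
            rw [h2', Matrix.one_mul]
        _ = V * (M * diagonal (RCLike.ofReal ∘ d)) * star V := by
            simp only [hM, Matrix.mul_assoc]
    conv_lhs => rw [hX.spectral_theorem, Unitary.conjStarAlgAut_apply]
    rw [key, trace_conj V hVmem, Matrix.trace]
    congr 1; funext i
    simp [Matrix.mul_diagonal, Matrix.diag_apply]
  have hdiag : ∀ i, |(M i i).re| ≤ 1 := by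
    intro i
    have hminus : (1 - M).PosSemidef := by
      have h := h1.conjTranspose_mul_mul_same V
      simpa [Matrix.mul_sub, Matrix.sub_mul, hM, Matrix.mul_assoc, h1c,
        Matrix.star_eq_conjTranspose] using h
    have hplus : (1 + M).PosSemidef := by
      have h := h2.conjTranspose_mul_mul_same V
      simpa [Matrix.mul_add, Matrix.add_mul, hM, Matrix.mul_assoc, h1c,
        Matrix.star_eq_conjTranspose] using h
    have e1 := psd_diag_re_nonneg hminus i
    have e2 := psd_diag_re_nonneg hplus i
    simp only [Matrix.sub_apply, Matrix.add_apply, Matrix.one_apply_eq,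
      Complex.sub_re, Complex.add_re, Complex.one_re] at e1 e2
    rw [abs_le]; constructor <;> linarith
  rw [htr, Complex.re_sum]
  calc ∑ i, (M i i * (d i : ℂ)).re = ∑ i, (M i i).re * d i := by
        apply Finset.sum_congr rfl; intro i _; simp [Complex.mul_re]
    _ ≤ ∑ i, |d i| := by
        refine Finset.sum_le_sum fun i _ => ?_
        calc (M i i).re * d i ≤ |(M i i).re * d i| := le_abs_self _
          _ = |(M i i).re| * |d i| := abs_mul _ _
          _ ≤ 1 * |d i| := mul_le_mul_of_nonneg_right (hdiag i) (abs_nonneg _)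
          _ = |d i| := one_mul _

section kron
variable {A B : Type*} [Fintype A] [Fintype B] [DecidableEq A] [DecidableEq B]

lemma ptraceB_isHermitian (X : Matrix (A × B) (A × B) ℂ) (hX : X.IsHermitian) :
    (ptraceB X).IsHermitian := by
  ext a a'
  simp only [conjTranspose_apply, ptraceB, of_apply, star_sum]
  exact Finset.sum_congr rfl fun b _ => hX.apply _ _

lemma kron_conjTranspose (M : Matrix A A ℂ) (N : Matrix B B ℂ) :
    (M ⊗ₖ N)ᴴ = Mᴴ ⊗ₖ Nᴴ := by
  ext ⟨a, b⟩ ⟨a', b'⟩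
  simp [conjTranspose_apply, mul_comm]

lemma kron_one_psd {S : Matrix A A ℂ} (hS : S.PosSemidef) :
    (S ⊗ₖ (1 : Matrix B B ℂ)).PosSemidef := by
  exact hS.kronecker PosSemidef.one

lemma sub_kron (M N : Matrix A A ℂ) (P : Matrix B B ℂ) :
    (M - N) ⊗ₖ P = M ⊗ₖ P - N ⊗ₖ P := by
  ext ⟨a, b⟩ ⟨a', b'⟩
  simp [sub_mul]

lemma add_kron (M N : Matrix A A ℂ) (P : Matrix B B ℂ) :
    (M + N) ⊗ₖ P = M ⊗ₖ P + N ⊗ₖ P := by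
  ext ⟨a, b⟩ ⟨a', b'⟩
  simp [add_mul]

lemma trace_kron_mul (S : Matrix A A ℂ) (X : Matrix (A × B) (A × B) ℂ) :
    ((S ⊗ₖ (1 : Matrix B B ℂ)) * X).trace = (S * ptraceB X).trace := by
  simp only [Matrix.trace, Matrix.diag_apply, Matrix.mul_apply, ptraceB, of_apply,
    Fintype.sum_prod_type, kroneckerMap_apply, Matrix.one_apply, mul_ite, mul_one, mul_zero,
    ite_mul, zero_mul, Finset.sum_ite_eq, Finset.sum_ite_eq', Finset.mem_univ, if_true,
    Finset.mul_sum]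
  exact Finset.sum_congr rfl fun a _ => Finset.sum_comm

end kron


end

/-- The trace norm is non-increasing under partial trace (for Hermitian matrices). -/
theorem stmt_4 {A B : Type*} [Fintype A] [Fintype B] [DecidableEq A] [DecidableEq B]
    (X : Matrix (A × B) (A × B) ℂ) (hX : X.IsHermitian) :
    traceNorm (ptraceB X) ≤ traceNorm X := by
  have hY : (ptraceB X).IsHermitian := ptraceB_isHermitian X hX
  set W : Matrix A A ℂ := (hY.eigenvectorUnitary : Matrix A A ℂ) with hW
  have hWmem : W ∈ Matrix.unitaryGroup A ℂ := hY.eigenvectorUnitary.2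
  have hWW : W * star W = 1 := Matrix.mem_unitaryGroup_iff.mp hWmem
  set μ : A → ℝ := hY.eigenvalues with hμ
  set s : A → ℝ := fun i => if 0 ≤ μ i then 1 else -1 with hs
  set S : Matrix A A ℂ := W * diagonal (fun i => ((s i : ℝ) : ℂ)) * star W with hS
  have hSY : ((S * ptraceB X).trace).re = ∑ i, |μ i| := by
    have e : S * ptraceB X
        = W * diagonal (fun i => ((s i : ℝ) : ℂ) * (RCLike.ofReal ∘ μ) i) * star W := by
      conv_lhs => rw [hY.spectral_theorem, Unitary.conjStarAlgAut_apply]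
      rw [hS, conj_mul_conj W hWmem]
    rw [e, trace_conj W hWmem, Matrix.trace_diagonal, Complex.re_sum]
    refine Finset.sum_congr rfl fun i _ => ?_
    rw [show ((RCLike.ofReal ∘ μ) i : ℂ) = ((μ i : ℝ) : ℂ) from rfl, ← Complex.ofReal_mul,
      Complex.ofReal_re]
    by_cases h : 0 ≤ μ i
    · simp [hs, h, _root_.abs_of_nonneg h]
    · simp [hs, h, _root_.abs_of_neg (lt_of_not_ge h)]
  have hdiagPSD : ∀ t : A → ℝ, (∀ i, 0 ≤ t i) →
      (W * diagonal (fun i => ((t i : ℝ) : ℂ)) * star W).PosSemidef := fun t ht =>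
    (posSemidef_diagonal_iff.mpr fun i => Complex.zero_le_real.mpr (ht i)).mul_mul_conjTranspose_same W
  have h1m : ((1 : Matrix A A ℂ) - S).PosSemidef := by
    have e : (1 : Matrix A A ℂ) - S = W * diagonal (fun i => ((1 - s i : ℝ) : ℂ)) * star W := by
      have h1d : (1 : Matrix A A ℂ) = W * diagonal (fun _ : A => ((1 : ℝ) : ℂ)) * star W := by
        have hd1 : diagonal (fun _ : A => ((1 : ℝ) : ℂ)) = 1 := by
          rw [← Matrix.diagonal_one]; congr 1
        rw [hd1, Matrix.mul_one, hWW]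
      rw [hS, h1d, ← Matrix.sub_mul, ← Matrix.mul_sub, Matrix.diagonal_sub]
      congr 3
      funext i; push_cast; ring
    rw [e]
    refine hdiagPSD _ fun i => ?_
    by_cases h : 0 ≤ μ i <;> simp [hs, h] <;> norm_num
  have h1p : ((1 : Matrix A A ℂ) + S).PosSemidef := by
    have e : (1 : Matrix A A ℂ) + S = W * diagonal (fun i => ((1 + s i : ℝ) : ℂ)) * star W := by
      have h1d : (1 : Matrix A A ℂ) = W * diagonal (fun _ : A => ((1 : ℝ) : ℂ)) * star W := by
        have hd1 : diagonal (fun _ : A => ((1 : ℝ) : ℂ)) = 1 := by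
          rw [← Matrix.diagonal_one]; congr 1
        rw [hd1, Matrix.mul_one, hWW]
      rw [hS, h1d, ← Matrix.add_mul, ← Matrix.mul_add, Matrix.diagonal_add]
      congr 3
      funext i; push_cast; ring
    rw [e]
    refine hdiagPSD _ fun i => ?_
    by_cases h : 0 ≤ μ i <;> simp [hs, h] <;> norm_num
  have h1m' : ((1 : Matrix (A × B) (A × B) ℂ) - S ⊗ₖ (1 : Matrix B B ℂ)).PosSemidef := by
    have e : (1 : Matrix (A × B) (A × B) ℂ) - S ⊗ₖ (1 : Matrix B B ℂ)
        = ((1 : Matrix A A ℂ) - S) ⊗ₖ (1 : Matrix B B ℂ) := by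
      rw [sub_kron, Matrix.one_kronecker_one]
    rw [e]; exact kron_one_psd h1m
  have h1p' : ((1 : Matrix (A × B) (A × B) ℂ) + S ⊗ₖ (1 : Matrix B B ℂ)).PosSemidef := by
    have e : (1 : Matrix (A × B) (A × B) ℂ) + S ⊗ₖ (1 : Matrix B B ℂ)
        = ((1 : Matrix A A ℂ) + S) ⊗ₖ (1 : Matrix B B ℂ) := by
      rw [add_kron, Matrix.one_kronecker_one]
    rw [e]; exact kron_one_psd h1p
  calc traceNorm (ptraceB X) = ∑ i, |μ i| := traceNorm_herm _ hY
    _ = ((S * ptraceB X).trace).re := hSY.symm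
    _ = (((S ⊗ₖ (1 : Matrix B B ℂ)) * X).trace).re := by rw [trace_kron_mul]
    _ ≤ traceNorm X := re_trace_mul_le X hX _ h1m' h1p'
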